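/- Suppose n, m, y, k are positive integers with k ≥ 2, y ≥ 2, m ≥ 2, 1 ≤ n ≤ k, and Q_n^{(k)} = y^m (so that 2F_{2n} = y^m). Then 2 ≤ y ≤ 100 implies (n, m, y) = (3, 2, 4) or (n, m, y) = (3, 4, 2). -/

import Mathlib

open Nat


open Nat

/-- Exact expansion of `fib (t*s)` and `fib (t*s+1)` modulo powers of `fib t`. -/
lemma fibII (t : ℕ) (ht : 1 ≤ t) : ∀ s : ℕ, ∃ u v : ℤ,
    (fib (t*s) : ℤ) = s * fib t * (fib (t+1))^(s-1)
      - (s.choose 2) * (fib t)^2 * (fib (t+1))^(s-2) + (fib t)^3 * u ∧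
    (fib (t*s+1) : ℤ) = (fib (t+1))^s + (fib t)^2 * v := by
  intro s
  induction s with
  | zero => exact ⟨0, 0, by simp, by simp⟩
  | succ s ih =>
    obtain ⟨u, v, hA, hB⟩ := ih
    have hadd1 : (fib (t*(s+1)) : ℤ)
        = fib (t*s) * (fib (t+1) - fib t) + fib (t*s+1) * fib t := by
      have e : t*(s+1) = t*s + (t-1) + 1 := by rw [Nat.mul_succ]; omega
      rw [e, Nat.fib_add, show t - 1 + 1 = t from by omega]
      have e2 : (fib (t-1) : ℤ) = fib (t+1) - fib t := by
        have h2 := Nat.fib_add_two (n := t-1)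
        rw [show t - 1 + 2 = t + 1 from by omega, show t - 1 + 1 = t from by omega] at h2
        rw [h2]; push_cast; ring
      push_cast [e2]; ring
    have hadd2 : (fib (t*(s+1)+1) : ℤ) = fib (t*s) * fib t + fib (t*s+1) * fib (t+1) := by
      rw [show t*(s+1)+1 = t*s + t + 1 from by ring, Nat.fib_add]; push_cast; ring
    have hchoose : ((s+1).choose 2 : ℤ) = s.choose 2 + s := by
      rw [Nat.choose_succ_succ s 1, Nat.choose_one_right]; push_cast; ring
    refine ⟨u * ((fib (t+1):ℤ) - fib t) + (s.choose 2 : ℤ) * (fib (t+1))^(s-2) + v,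
      (s:ℤ) * (fib (t+1))^(s-1) - (s.choose 2 : ℤ) * fib t * (fib (t+1))^(s-2)
        + (fib t)^2 * u + v * fib (t+1), ?_, ?_⟩
    · rw [hadd1, hA, hB, hchoose]
      rcases Nat.lt_or_ge s 2 with hs2 | hs2
      · interval_cases s <;> norm_num <;> ring
      · rw [show s - 1 = (s-2) + 1 from by omega, show s + 1 - 2 = (s-2) + 1 from by omega,
          show s + 1 - 1 = (s-2) + 1 + 1 from by omega, show s = (s-2) + 1 + 1 from by omega]
        generalize (s - 2) = e
        rw [pow_succ, pow_succ, pow_succ]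
        push_cast; ring
    · rw [hadd2, hA, hB]
      rcases Nat.lt_or_ge s 2 with hs2 | hs2
      · interval_cases s <;> norm_num <;> ring
      · rw [show s - 1 = (s-2) + 1 from by omega, show s = (s-2) + 1 + 1 from by omega]
        generalize (s - 2) = e
        rw [pow_succ, pow_succ]
        push_cast; ring



lemma tele (f : ℕ → ℤ) : ∀ b : ℕ, ∀ a : ℕ, a ≤ b →
    ∑ i ∈ Finset.Icc a b, (f i - f (i+1)) = f a - f (b+1) := by
  intro b
  induction b with
  | zero =>
    intro a ha
    interval_cases a
    simp
  | succ b ih =>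
    intro a ha
    rcases Nat.lt_or_ge a (b+1) with h | h
    · rw [Finset.sum_Icc_succ_top (by omega : a ≤ b + 1), ih a (by omega)]
      ring
    · have : a = b + 1 := by omega
      subst this
      simp

lemma fib_three_term (j : ℕ) (h3 : 2 ≤ j) :
    (fib (2*j) : ℤ) = 3 * fib (2*(j-1)) - fib (2*(j-2)) := by
  obtain ⟨i, rfl⟩ : ∃ i, j = i + 2 := ⟨j - 2, by omega⟩
  set m := 2*i with hm
  have e1 : 2*(i+2) = m+4 := by omega
  have e2 : 2*(i+2-1) = m+2 := by omega
  have e3 : 2*(i+2-2) = m := by omega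
  rw [e1, e2, e3]
  have f1 : fib (m+4) = fib (m+2) + fib (m+3) := by
    rw [show m+4 = (m+2)+2 from by omega, Nat.fib_add_two]
  have f2 : fib (m+3) = fib (m+1) + fib (m+2) := by
    rw [show m+3 = (m+1)+2 from by omega, Nat.fib_add_two]
  have f3 : fib (m+2) = fib m + fib (m+1) := Nat.fib_add_two
  push_cast [f1, f2, f3]
  ring

section

variable (k : ℕ) (Q : ℤ → ℤ)

theorem Qval (hk : 2 ≤ k)
    (hQinit : ∀ j : ℤ, 2 - (k : ℤ) ≤ j → j ≤ -1 → Q j = 0)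
    (hQ0 : Q 0 = 2) (hQ1 : Q 1 = 2)
    (hQrec : ∀ j : ℤ, 2 ≤ j →
      Q j = 2 * Q (j - 1) + ∑ i ∈ Finset.Icc 2 k, Q (j - (i : ℤ))) :
    ∀ j : ℕ, 1 ≤ j → j ≤ k → Q (j : ℤ) = 2 * fib (2*j) := by
  have key : ∀ j : ℕ, 3 ≤ j → j ≤ k → Q (j:ℤ) = 3 * Q ((j:ℤ)-1) - Q ((j:ℤ)-2) := by
    intro j h3 hjk
    have h3' : (3:ℤ) ≤ (j:ℤ) := by exact_mod_cast h3
    have hjk' : (j:ℤ) ≤ (k:ℤ) := by exact_mod_cast hjk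
    have e1 := hQrec (j:ℤ) (by omega)
    have e2 := hQrec ((j:ℤ)-1) (by omega)
    have htel : ∑ i ∈ Finset.Icc 2 k, (Q ((j:ℤ) - (i:ℤ)) - Q ((j:ℤ) - ((i:ℤ)+1)))
        = Q ((j:ℤ) - 2) - Q ((j:ℤ) - ((k:ℤ)+1)) := by
      have h := tele (fun i : ℕ => Q ((j:ℤ) - (i:ℤ))) k 2 hk
      have hl : ∑ i ∈ Finset.Icc 2 k, (Q ((j:ℤ) - (i:ℤ)) - Q ((j:ℤ) - ((i:ℤ)+1)))
          = ∑ i ∈ Finset.Icc 2 k, (Q ((j:ℤ) - (i:ℤ)) - Q ((j:ℤ) - ((i+1 : ℕ):ℤ))) := by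
        apply Finset.sum_congr rfl
        intro i _
        push_cast
        ring_nf
      rw [hl, h]
      push_cast
      ring_nf
    have hzero : Q ((j:ℤ) - ((k:ℤ)+1)) = 0 := hQinit _ (by omega) (by omega)
    have hsplit : ∑ i ∈ Finset.Icc 2 k, Q ((j:ℤ) - (i:ℤ))
        = ∑ i ∈ Finset.Icc 2 k, Q (((j:ℤ)-1) - (i:ℤ)) + (Q ((j:ℤ)-2) - 0) := by
      rw [← hzero, ← htel, ← Finset.sum_add_distrib]
      apply Finset.sum_congr rfl
      intro i _
      rw [show (j:ℤ) - ((i:ℤ)+1) = ((j:ℤ)-1) - (i:ℤ) from by ring]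
      ring
    rw [hsplit] at e1
    rw [show (j:ℤ)-1-1 = (j:ℤ)-2 from by ring] at e2
    linarith [e1, e2]
  intro j
  induction j using Nat.strong_induction_on with
  | _ j ih =>
    intro h1 hjk
    rcases Nat.lt_or_ge j 3 with hj3 | hj3
    · interval_cases j
      · have hc : ((1:ℕ):ℤ) = 1 := by norm_num
        rw [hc, hQ1]
        norm_num [show fib 2 = 1 from by norm_num [Nat.fib]]
      · have e := hQrec 2 (by norm_num)
        have hmem : (2:ℕ) ∈ Finset.Icc 2 k := Finset.mem_Icc.mpr ⟨le_refl 2, hk⟩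
        have hside : ∀ i ∈ Finset.Icc 2 k, i ≠ 2 → Q ((2:ℤ) - (i:ℤ)) = 0 := by
          intro i hi hne
          rw [Finset.mem_Icc] at hi
          apply hQinit
          · have : (i:ℤ) ≤ (k:ℤ) := by exact_mod_cast hi.2
            omega
          · have : (3:ℤ) ≤ (i:ℤ) := by exact_mod_cast (by omega : 3 ≤ i)
            omega
        have hsum := Finset.sum_eq_single_of_mem (s := Finset.Icc 2 k)
          (f := fun i : ℕ => Q ((2:ℤ) - (i:ℤ))) 2 hmem hside
        norm_num at hsum
        rw [hsum, hQ0] at e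
        norm_num at e
        rw [hQ1] at e
        have hc : ((2:ℕ):ℤ) = 2 := by norm_num
        rw [hc, e]
        norm_num [show fib 4 = 3 from by norm_num [Nat.fib]]
    · have hrec := key j hj3 hjk
      have ih1 := ih (j-1) (by omega) (by omega) (by omega)
      have ih2 := ih (j-2) (by omega) (by omega) (by omega)
      have c1 : ((j-1 : ℕ) : ℤ) = (j:ℤ) - 1 := by
        push_cast [Nat.cast_sub (by omega : 1 ≤ j)]
        ring
      have c2 : ((j-2 : ℕ) : ℤ) = (j:ℤ) - 2 := by
        push_cast [Nat.cast_sub (by omega : 2 ≤ j)]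
        ring
      rw [c1] at ih1
      rw [c2] at ih2
      rw [hrec, ih1, ih2, fib_three_term j (by omega)]
      push_cast
      ring

end




section
variable {p : ℕ} [hp : Fact p.Prime]

lemma not_dvd_fib_succ {t : ℕ} (hpf : p ∣ fib t) : ¬ (p:ℤ) ∣ (fib (t+1) : ℤ) := by
  intro h
  rw [Int.natCast_dvd_natCast] at h
  have : p ∣ Nat.gcd (fib t) (fib (t+1)) := Nat.dvd_gcd hpf h
  rw [Nat.fib_coprime_fib_succ t] at this
  exact hp.out.one_lt.ne' (Nat.dvd_one.mp this)

lemma fib_val_core {t : ℕ} (ht : 1 ≤ t) (hpf : p ∣ fib t) {e b : ℕ}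
    (hb : padicValNat p (fib t) + 1 ≤ b)
    (hlin : (p:ℤ)^b ∣ (fib t : ℤ) * (fib (t+1) : ℤ)^e) :
    False := by
  have hip : Prime (p:ℤ) := Nat.prime_iff_prime_int.mp hp.out
  have h2 : (p:ℤ)^b ∣ (fib t : ℤ) :=
    hip.pow_dvd_of_dvd_mul_right _ (fun hg => not_dvd_fib_succ hpf (hip.dvd_of_dvd_pow hg)) hlin
  have h3 : p^b ∣ fib t := by exact_mod_cast h2
  have h4 : p^(padicValNat p (fib t) + 1) ∣ fib t := (pow_dvd_pow _ hb).trans h3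
  exact pow_succ_padicValNat_not_dvd (Nat.fib_pos.mpr (by omega)).ne' h4

lemma fib_val_i {t : ℕ} (ht : 1 ≤ t) (hpf : p ∣ fib t) {s : ℕ} (hs : 1 ≤ s)
    (hps : ¬ p ∣ s) : padicValNat p (fib (t*s)) ≤ padicValNat p (fib t) := by
  set c := padicValNat p (fib t) with hc
  by_contra hlt
  push_neg at hlt
  have hts : fib (t*s) ≠ 0 := (Nat.fib_pos.mpr (by positivity)).ne'
  have hdvd : (p:ℤ)^(c+1) ∣ (fib (t*s) : ℤ) := by
    exact_mod_cast (padicValNat_dvd_iff_le hts).mpr hlt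
  obtain ⟨u, v, hA, _⟩ := fibII t ht s
  have hc1 : 1 ≤ c := one_le_padicValNat_of_dvd (Nat.fib_pos.mpr (by omega)).ne' hpf
  have hfc : (p:ℤ)^c ∣ (fib t : ℤ) := by exact_mod_cast pow_padicValNat_dvd
  have hsq : ((fib t : ℤ))^2 = (fib t : ℤ) * (fib t : ℤ) := sq (fib t : ℤ)
  have hquad : (p:ℤ)^(c+1) ∣ ((fib t : ℤ))^2 :=
    (pow_dvd_pow _ (by omega : c+1 ≤ c+c)).trans
      (by rw [pow_add, hsq]; exact mul_dvd_mul hfc hfc)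
  have hlin : (p:ℤ)^(c+1) ∣ (s : ℤ) * ((fib t : ℤ) * (fib (t+1) : ℤ)^(s-1)) := by
    have heq : (s : ℤ) * ((fib t : ℤ) * (fib (t+1) : ℤ)^(s-1))
        = (fib (t*s) : ℤ) + (fib t:ℤ)^2 * ((s.choose 2) * (fib (t+1))^(s-2) - (fib t) * u) := by
      rw [hA]; ring
    rw [heq]
    exact dvd_add hdvd (hquad.mul_right _)
  have hip : Prime (p:ℤ) := Nat.prime_iff_prime_int.mp hp.out
  exact fib_val_core ht hpf (by omega)
    (hip.pow_dvd_of_dvd_mul_left _ (by rwa [Int.natCast_dvd_natCast]) hlin)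

lemma fib_val_ii (hodd : p % 2 = 1) {t : ℕ} (ht : 1 ≤ t) (hpf : p ∣ fib t) :
    padicValNat p (fib (t*p)) ≤ padicValNat p (fib t) + 1 := by
  set c := padicValNat p (fib t) with hc
  by_contra hlt
  push_neg at hlt
  have hppos : 2 < p := by
    have := hp.out.two_le
    rcases Nat.eq_or_lt_of_le this with h | h
    · omega
    · omega
  have hts : fib (t*p) ≠ 0 := (Nat.fib_pos.mpr (by positivity)).ne'
  have hdvd : (p:ℤ)^(c+2) ∣ (fib (t*p) : ℤ) := by
    exact_mod_cast (padicValNat_dvd_iff_le hts).mpr (by omega)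
  obtain ⟨u, v, hA, _⟩ := fibII t ht p
  have hc1 : 1 ≤ c := one_le_padicValNat_of_dvd (Nat.fib_pos.mpr (by omega)).ne' hpf
  have hfc : (p:ℤ)^c ∣ (fib t : ℤ) := by exact_mod_cast pow_padicValNat_dvd
  have hsq : ((fib t : ℤ))^2 = (fib t : ℤ) * (fib t : ℤ) := sq (fib t : ℤ)
  obtain ⟨d, hd⟩ : (p:ℤ) ∣ ((p.choose 2 : ℕ) : ℤ) := by
    exact_mod_cast Nat.Prime.dvd_choose_self hp.out (by omega) (by omega)
  have hquad : (p:ℤ)^(c+2) ∣ ((p.choose 2 : ℕ) : ℤ) * (fib t : ℤ)^2 * (fib (t+1) : ℤ)^(p-2) := by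
    have h1 : (p:ℤ)^(c+2) ∣ (p:ℤ) * ((fib t:ℤ))^2 :=
      (pow_dvd_pow _ (by omega : c+2 ≤ 1+(c+c))).trans
        (by rw [pow_add, pow_one, pow_add, hsq]
            exact mul_dvd_mul dvd_rfl (mul_dvd_mul hfc hfc))
    have heq2 : ((p.choose 2 : ℕ) : ℤ) * (fib t : ℤ)^2 * (fib (t+1) : ℤ)^(p-2)
        = ((p:ℤ) * ((fib t:ℤ))^2) * (d * (fib (t+1) : ℤ)^(p-2)) := by rw [hd]; ring
    rw [heq2]
    exact h1.mul_right _
  have hcube : (p:ℤ)^(c+2) ∣ (fib t : ℤ)^3 * u := by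
    refine Dvd.dvd.mul_right ?_ u
    exact (pow_dvd_pow _ (by omega : c+2 ≤ c*3)).trans
      (by rw [pow_mul]; exact pow_dvd_pow_of_dvd hfc 3)
  have hlin : (p:ℤ) * (p:ℤ)^(c+1) ∣ (p:ℤ) * ((fib t : ℤ) * (fib (t+1) : ℤ)^(p-1)) := by
    have heq : (p:ℤ) * ((fib t : ℤ) * (fib (t+1) : ℤ)^(p-1))
        = (fib (t*p) : ℤ) + ((p.choose 2 : ℕ) : ℤ) * (fib t:ℤ)^2 * (fib (t+1))^(p-2)
          - (fib t:ℤ)^3 * u := by rw [hA]; ring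
    rw [show (p:ℤ) * (p:ℤ)^(c+1) = (p:ℤ)^(c+2) from (_root_.pow_succ' (p:ℤ) (c+1)).symm]
    rw [heq]
    exact dvd_sub (dvd_add hdvd hquad) hcube
  have hlin2 : (p:ℤ)^(c+1) ∣ (fib t : ℤ) * (fib (t+1) : ℤ)^(p-1) :=
    (mul_dvd_mul_iff_left (by exact_mod_cast hp.out.ne_zero : (p:ℤ) ≠ 0)).mp hlin
  exact fib_val_core ht hpf (by omega) hlin2

/-- LTE upper bound for Fibonacci valuations: odd prime case. -/
lemma fib_val_le (hodd : p % 2 = 1) : ∀ s, 1 ≤ s → ∀ t, 1 ≤ t → p ∣ fib t →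
    padicValNat p (fib (t*s)) ≤ padicValNat p (fib t) + padicValNat p s := by
  intro s
  induction s using Nat.strong_induction_on with
  | _ s ih =>
    intro hs t ht hpf
    by_cases hps : p ∣ s
    · obtain ⟨s', rfl⟩ := hps
      have hp2 : 2 ≤ p := hp.out.two_le
      have hs' : 1 ≤ s' := by
        rcases Nat.eq_zero_or_pos s' with rfl | h
        · simp at hs
        · exact h
      have hs'lt : s' < p * s' := by
        have := Nat.lt_mul_iff_one_lt_left hs' |>.mpr (by omega : 1 < p)
        omega
      have hpfp : p ∣ fib (t*p) := hpf.trans (Nat.fib_dvd _ _ ⟨p, rfl⟩)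
      have h1 : padicValNat p (fib ((t*p)*s')) ≤ padicValNat p (fib (t*p)) + padicValNat p s' :=
        ih s' hs'lt hs' (t*p) (Nat.mul_pos ht hp.out.pos) hpfp
      have h2 := fib_val_ii hodd ht hpf
      have h3 : padicValNat p (p * s') = 1 + padicValNat p s' := by
        rw [padicValNat.mul (by omega) (by omega), padicValNat.self hp.out.one_lt]
      have heqidx : t*(p*s') = (t*p)*s' := by ring
      rw [heqidx, h3]
      omega
    · exact (fib_val_i ht hpf hs hps).trans (by omega)

end




lemma rank_dvd {p z N : ℕ} (hz : 0 < z) (hN : 0 < N) (hzf : p ∣ fib z)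
    (hmin : ∀ d, 0 < d → d < z → ¬ p ∣ fib d) (hNf : p ∣ fib N) : z ∣ N := by
  have hgcd : p ∣ fib (Nat.gcd N z) := by
    rw [Nat.fib_gcd]
    exact Nat.dvd_gcd hNf hzf
  have h1 : Nat.gcd N z ∣ z := Nat.gcd_dvd_right N z
  have h2 : 0 < Nat.gcd N z := Nat.gcd_pos_of_pos_left z hN
  have h3 : Nat.gcd N z ≤ z := Nat.le_of_dvd hz h1
  rcases Nat.lt_or_ge (Nat.gcd N z) z with h | h
  · exact absurd hgcd (hmin _ h2 h)
  · have : Nat.gcd N z = z := by omega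
    rw [← this]
    exact Nat.gcd_dvd_left N z

def zt : ℕ → ℕ
  | 3 => 4 | 5 => 5 | 7 => 8 | 11 => 10 | 13 => 7 | 17 => 9 | 19 => 18
  | 23 => 24 | 29 => 14 | 31 => 30 | 37 => 19 | 41 => 20 | 43 => 44 | 47 => 16
  | _ => 1

set_option synthInstance.maxSize 2000 in
set_option maxHeartbeats 4000000 in
lemma table : ∀ p ≤ 50, (2 ≤ p ∧ p % 2 = 1 ∧ (∀ d, d < p → 2 ≤ d → ¬ d ∣ p)) →
    0 < zt p ∧ p ∣ fib (zt p) ∧ (∀ d, d < zt p → 0 < d → ¬ p ∣ fib d)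
      ∧ ¬ p*p ∣ fib (zt p) := by decide

lemma two_pow_le_fib : ∀ n : ℕ, 2 ^ n ≤ fib (2*n+2) := by
  intro n
  induction n with
  | zero => simp
  | succ n ih =>
    have h1 : 2*(n+1)+2 = (2*n+2) + 2 := by ring
    rw [h1, Nat.fib_add_two]
    have h2 : fib (2*n+2) ≤ fib (2*n+2+1) := Nat.fib_mono (by omega)
    calc 2^(n+1) = 2^n + 2^n := by ring
    _ ≤ fib (2*n+2+1) + fib (2*n+2) := Nat.add_le_add (ih.trans h2) ih
    _ = fib (2*n+2) + fib (2*n+2+1) := by ring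

lemma pow3_ge : ∀ m : ℕ, 5 ≤ m → 16 * m ≤ 3 ^ (m-1) := by
  intro m hm
  induction m, hm using Nat.le_induction with
  | base => norm_num
  | succ m hm ih =>
    have h3 : m + 1 - 1 = (m - 1) + 1 := by omega
    rw [h3, pow_succ]
    have := ih
    omega

set_option synthInstance.maxSize 2000 in
set_option maxHeartbeats 4000000 in
lemma final_check : ∀ n < 27, ∀ m < 5, ∀ y < 101,
    (1 ≤ n ∧ 2 ≤ m ∧ 2 ≤ y ∧ 2 * fib (2*n) = y^m) →
    (n = 3 ∧ m = 2 ∧ y = 4) ∨ (n = 3 ∧ m = 4 ∧ y = 2) := by decide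


set_option synthInstance.maxSize 2000 in
lemma pow2_check : ∀ d ≤ 12, (d ∣ 12 ∧ 16 ∣ fib d) → d = 12 := by decide




theorem nt_main (n m y : ℕ) (hy : 2 ≤ y) (hy100 : y ≤ 100) (hm : 2 ≤ m)
    (hn : 1 ≤ n) (heq : 2 * fib (2*n) = y ^ m) :
    (n = 3 ∧ m = 2 ∧ y = 4) ∨ (n = 3 ∧ m = 4 ∧ y = 2) := by
  have hfibpos : 0 < fib (2*n) := Nat.fib_pos.mpr (by omega)
  have hyeven : 2 ∣ y :=
    Nat.prime_two.dvd_of_dvd_pow (⟨fib (2*n), heq.symm⟩ : 2 ∣ y ^ m)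
  have hgrow : 2 ^ n ≤ y ^ m := by
    rcases Nat.exists_eq_add_of_le hn with ⟨j, rfl⟩
    calc 2^(1+j) = 2*2^j := by rw [pow_add, pow_one]
    _ ≤ 2 * fib (2*j+2) := by have := two_pow_le_fib j; omega
    _ = 2 * fib (2*(1+j)) := by ring_nf
    _ = y ^ m := heq
  by_cases hpow : ∃ a < 8, y = 2 ^ a
  · -- y is a power of two
    obtain ⟨a, ha8, rfl⟩ := hpow
    have ha1 : 1 ≤ a := by
      rcases Nat.eq_zero_or_pos a with rfl | h
      · simp at hy
      · exact h
    have ham : 2 ≤ a * m := by nlinarith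
    have hfe : fib (2*n) = 2 ^ (a*m - 1) := by
      have h1 : ((2:ℕ) ^ a) ^ m = 2 ^ (a*m) := by rw [← pow_mul]
      have h2 : (2:ℕ) ^ (a*m) = 2 * 2 ^ (a*m-1) := by
        rw [← _root_.pow_succ']
        congr 1
        omega
      omega
    by_cases h16 : 16 ∣ fib (2*n)
    · exfalso
      have hgc : 16 ∣ fib (Nat.gcd (2*n) 12) := by
        rw [Nat.fib_gcd]
        exact Nat.dvd_gcd h16 (by norm_num)
      have hd12 : Nat.gcd (2*n) 12 ∣ 12 := Nat.gcd_dvd_right _ _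
      have hle : Nat.gcd (2*n) 12 ≤ 12 := Nat.le_of_dvd (by norm_num) hd12
      have h12 : Nat.gcd (2*n) 12 = 12 := pow2_check _ hle ⟨hd12, hgc⟩
      have hdvd : (12:ℕ) ∣ 2*n := h12 ▸ Nat.gcd_dvd_left (2*n) 12
      have h144 : fib 12 ∣ fib (2*n) := Nat.fib_dvd _ _ hdvd
      have h9 : (9:ℕ) ∣ fib (2*n) := dvd_trans (by norm_num) h144
      rw [hfe] at h9
      have h3 : (3:ℕ) ∣ 2 ^ (a*m-1) := dvd_trans (by norm_num) h9
      have := Nat.Prime.dvd_of_dvd_pow (p := 3) (by norm_num) h3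
      norm_num at this
    · have he3 : a*m - 1 < 4 := by
        by_contra hcon
        push_neg at hcon
        have : (16:ℕ) ∣ 2 ^ (a*m-1) := by
          have : (2:ℕ)^4 ∣ 2 ^ (a*m-1) := pow_dvd_pow 2 hcon
          norm_num at this ⊢
          exact this
        exact h16 (hfe ▸ this)
      have hfle : fib (2*n) ≤ 8 := by
        rw [hfe]
        calc (2:ℕ) ^ (a*m-1) ≤ 2^3 := Nat.pow_le_pow_right (by norm_num) (by omega)
        _ = 8 := by norm_num
      have h2n : 2*n ≤ 6 := by
        by_contra hcon
        push_neg at hcon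
        have : fib 7 ≤ fib (2*n) := Nat.fib_mono (by omega)
        norm_num [show fib 7 = 13 from by norm_num [Nat.fib]] at this
        omega
      have hn3 : n ≤ 3 := by omega
      interval_cases n
      · exfalso
        have h1 : fib 2 = 1 := by norm_num [Nat.fib]
        rw [show 2*1 = 2 from rfl, h1] at hfe
        have : (2:ℕ)^1 ≤ 2^(a*m-1) := Nat.pow_le_pow_right (by norm_num) (by omega)
        omega
      · exfalso
        have h1 : fib 4 = 3 := by norm_num [Nat.fib]
        rw [show 2*2 = 4 from rfl, h1] at hfe
        have : (2:ℕ) ∣ 2^(a*m-1) := dvd_pow_self 2 (by omega)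
        rw [← hfe] at this
        omega
      · have h1 : fib 6 = 8 := by norm_num [Nat.fib]
        rw [show 2*3 = 6 from rfl, h1] at hfe
        have he : a*m - 1 = 3 := by
          have := Nat.pow_right_injective (le_refl 2) (show (2:ℕ)^(a*m-1) = 2^3 by omega)
          omega
        have ham4 : a * m = 4 := by omega
        have ha2 : a ≤ 2 := by nlinarith
        interval_cases a
        · right
          refine ⟨rfl, by omega, by norm_num⟩
        · left
          refine ⟨rfl, by omega, by norm_num⟩
  · -- y has an odd prime factor
    push_neg at hpow
    have hy0 : y ≠ 0 := by omega
    set v2 := y.factorization 2 with hv2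
    set q := y / 2 ^ v2 with hqdef
    have hsplit : 2 ^ v2 * q = y := Nat.ordProj_mul_ordCompl_eq_self y 2
    have hqodd : ¬ 2 ∣ q := Nat.not_dvd_ordCompl Nat.prime_two hy0
    have hv2pos : 1 ≤ v2 := Nat.Prime.factorization_pos_of_dvd Nat.prime_two hy0 hyeven
    have hq1 : q ≠ 1 := by
      intro hq
      rw [hq, mul_one] at hsplit
      have hv27 : v2 < 8 := by
        by_contra hc
        push_neg at hc
        have : (2:ℕ)^8 ≤ 2^v2 := Nat.pow_le_pow_right (by norm_num) hc
        omega
      exact hpow v2 hv27 hsplit.symm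
    set p := q.minFac with hpdef
    have hp : p.Prime := Nat.minFac_prime hq1
    have hpq : p ∣ q := Nat.minFac_dvd q
    have hqy : q ∣ y := Nat.ordCompl_dvd y 2
    have hpy : p ∣ y := hpq.trans hqy
    have hpodd : p % 2 = 1 := by
      rcases Nat.even_or_odd p with he | ho
      · exfalso
        have : p = 2 := (Nat.Prime.even_iff hp).mp he
        rw [this] at hpq
        exact hqodd hpq
      · exact Nat.odd_iff.mp ho
    have hqpos : 0 < q := Nat.pos_of_ne_zero (by
      intro h
      rw [h, mul_zero] at hsplit
      omega)
    have hp50 : p ≤ 50 := by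
      have h1 : p ≤ q := Nat.minFac_le hqpos
      have h22 : (2:ℕ) ≤ 2 ^ v2 := by
        have := Nat.pow_le_pow_right (show 1 ≤ 2 by norm_num) hv2pos
        simpa using this
      have h2 : q ≤ y / 2 := Nat.div_le_div_left h22 (by norm_num)
      have h3 : y / 2 ≤ 50 := by omega
      omega
    obtain ⟨hz0, hzf, hmin, hsqf⟩ := table p hp50 ⟨hp.two_le, hpodd, by
      intro d hd h2d hddvd
      rcases (Nat.Prime.eq_one_or_self_of_dvd hp d hddvd) with h | h <;> omega⟩
    haveI : Fact p.Prime := ⟨hp⟩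
    have hpne2 : ¬ p ∣ 2 := by
      intro h
      interval_cases p <;> omega
    have hcop2 : Nat.Coprime p 2 := (Nat.Prime.coprime_iff_not_dvd hp).mpr hpne2
    have hn2pos : 0 < 2*n := by omega
    have hfibne : fib (2*n) ≠ 0 := by omega
    have hpfib : p ∣ fib (2*n) := by
      refine hcop2.dvd_of_dvd_mul_left ?_
      rw [heq]
      exact hpy.trans (dvd_pow_self y (by omega))
    obtain ⟨u, hu⟩ : zt p ∣ 2*n := rank_dvd hz0 hn2pos hzf (fun d h1 h2 => hmin d h2 h1) hpfib
    have hupos : 1 ≤ u := by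
      rcases Nat.eq_zero_or_pos u with rfl | h
      · omega
      · exact h
    have hpmfib : p^m ∣ fib (2*n) := by
      refine (hcop2.pow_left m).dvd_of_dvd_mul_left ?_
      rw [heq]
      exact pow_dvd_pow_of_dvd hpy m
    have hvm : m ≤ padicValNat p (fib (2*n)) := (padicValNat_dvd_iff_le hfibne).mp hpmfib
    have hvz1 : padicValNat p (fib (zt p)) ≤ 1 := by
      by_contra hcon
      push_neg at hcon
      refine hsqf ?_
      have h2 : p^2 ∣ fib (zt p) :=
        (padicValNat_dvd_iff_le (Nat.fib_pos.mpr hz0).ne').mpr hcon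
      rwa [pow_two] at h2
    have hlte : padicValNat p (fib (zt p * u)) ≤
        padicValNat p (fib (zt p)) + padicValNat p u :=
      fib_val_le hpodd u hupos (zt p) hz0 hzf
    rw [← hu] at hlte
    have hvu : padicValNat p u ≤ padicValNat p (2*n) := by
      rw [hu, padicValNat.mul (by omega) (by omega)]
      omega
    have hm1 : m - 1 ≤ padicValNat p (2*n) := by omega
    have hdvd2n : p^(m-1) ∣ 2*n := (padicValNat_dvd_iff_le (by omega)).mpr hm1
    have hp3 : 3 ≤ p := by
      have := hp.two_le
      omega
    have h3le : 3^(m-1) ≤ 2*n :=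
      (Nat.pow_le_pow_left hp3 (m-1)).trans (Nat.le_of_dvd hn2pos hdvd2n)
    have hm4 : m ≤ 4 := by
      by_contra hcon
      push_neg at hcon
      have h16m : 16 * m ≤ 2*n := (pow3_ge m (by omega)).trans h3le
      have h8m : 8 * m ≤ n := by omega
      have h1 : y ^ m ≤ 100 ^ m := Nat.pow_le_pow_left hy100 m
      have h2 : (100:ℕ) ^ m < 256 ^ m := Nat.pow_lt_pow_left (by norm_num) (by omega)
      have h3 : (256:ℕ) ^ m = 2 ^ (8*m) := by
        rw [pow_mul]
        norm_num
      have h4 : (2:ℕ) ^ (8*m) ≤ 2 ^ n := Nat.pow_le_pow_right (by norm_num) h8m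
      omega
    have hn27 : n < 27 := by
      by_contra hcon
      push_neg at hcon
      have h1 : (2:ℕ)^27 ≤ 2^n := Nat.pow_le_pow_right (by norm_num) hcon
      have h2 : y ^ m ≤ 100 ^ m := Nat.pow_le_pow_left hy100 m
      have h3 : (100:ℕ) ^ m ≤ 100 ^ 4 := Nat.pow_le_pow_right (by norm_num) hm4
      norm_num at h1 h3
      omega
    exact final_check n hn27 m (by omega) y (by omega) ⟨hn, hm, hy, heq⟩


/-- Suppose n, m, y, k are positive integers with k ≥ 2, y ≥ 2, m ≥ 2,
1 ≤ n ≤ k, and `Q_n^{(k)} = y^m`. Then 2 ≤ y ≤ 100 implies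
(n, m, y) = (3, 2, 4) or (n, m, y) = (3, 4, 2). -/
theorem small_solutions (k n m y : ℕ) (hk : 2 ≤ k) (hy : 2 ≤ y) (hm : 2 ≤ m)
    (hn1 : 1 ≤ n) (hnk : n ≤ k)
    (Q : ℤ → ℤ)
    (hQinit : ∀ j : ℤ, 2 - (k : ℤ) ≤ j → j ≤ -1 → Q j = 0)
    (hQ0 : Q 0 = 2) (hQ1 : Q 1 = 2)
    (hQrec : ∀ j : ℤ, 2 ≤ j →
      Q j = 2 * Q (j - 1) + ∑ i ∈ Finset.Icc 2 k, Q (j - (i : ℤ)))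
    (heq : Q (n : ℤ) = (y : ℤ) ^ m)
    (hy100 : y ≤ 100) :
    (n, m, y) = (3, 2, 4) ∨ (n, m, y) = (3, 4, 2) := by
  have hQn := Qval k Q hk hQinit hQ0 hQ1 hQrec n hn1 hnk
  rw [hQn] at heq
  have heqn : 2 * fib (2*n) = y ^ m := by exact_mod_cast heq
  rcases nt_main n m y hy hy100 hm hn1 heqn with ⟨h1, h2, h3⟩ | ⟨h1, h2, h3⟩
  · left
    subst h1; subst h2; subst h3
    rfl
  · right
    subst h1; subst h2; subst h3
    rfl
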